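/- Let μ ∈ (0,1) and s ∈ (0, μ), and define θ : [0, ∞) → ℝ by θ(τ) = π + τ − arctan(μ²τ/s² − √(μ²/s² − 1)) − arctan(√(μ²/s² − 1)). Then θ(0) = π and θ'(0) = 0; i.e., the Focal Line tributary enters the Focal Line (the line θ = π) tangentially. -/

import Mathlib

/-- For `μ ∈ (0,1)`, `s ∈ (0,μ)` and
`θ(τ) = π + τ − arctan(μ²τ/s² − √(μ²/s² − 1)) − arctan(√(μ²/s² − 1))`:
`θ(0) = π` and `θ'(0) = 0`, i.e. the Focal Line tributary enters the Focal Line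
(the line `θ = π`) tangentially. -/
theorem stmt_13 (μ s : ℝ) (hμ : μ ∈ Set.Ioo (0 : ℝ) 1) (hs : s ∈ Set.Ioo 0 μ)
    (θ : ℝ → ℝ)
    (hθ : ∀ τ : ℝ, θ τ =
      Real.pi + τ - Real.arctan (μ ^ 2 * τ / s ^ 2 - Real.sqrt (μ ^ 2 / s ^ 2 - 1))
        - Real.arctan (Real.sqrt (μ ^ 2 / s ^ 2 - 1))) :
    θ 0 = Real.pi ∧ HasDerivAt θ 0 0 := by
  obtain ⟨hμ0, hμ1⟩ := hμ
  obtain ⟨hs0, hsμ⟩ := hs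
  set a := Real.sqrt (μ ^ 2 / s ^ 2 - 1) with ha
  have hs2 : (0:ℝ) < s ^ 2 := by positivity
  have hnn : (0:ℝ) ≤ μ ^ 2 / s ^ 2 - 1 := by
    rw [sub_nonneg, le_div_iff₀ hs2, one_mul]
    exact pow_le_pow_left₀ hs0.le hsμ.le 2
  have ha2 : a ^ 2 = μ ^ 2 / s ^ 2 - 1 := Real.sq_sqrt hnn
  constructor
  · rw [hθ 0]
    simp [Real.arctan_neg]
  · have hg : HasDerivAt (fun τ : ℝ => μ ^ 2 * τ / s ^ 2 - a) (μ ^ 2 / s ^ 2) 0 := by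
      have : HasDerivAt (fun τ : ℝ => μ ^ 2 * τ / s ^ 2 - a) (μ ^ 2 * 1 / s ^ 2) 0 :=
        (((hasDerivAt_id 0).const_mul (μ ^ 2)).div_const (s ^ 2)).sub_const a
      simpa using this
    have hat : HasDerivAt (fun τ : ℝ => Real.arctan (μ ^ 2 * τ / s ^ 2 - a))
        ((1 / (1 + (μ ^ 2 * 0 / s ^ 2 - a) ^ 2)) * (μ ^ 2 / s ^ 2)) 0 :=
      (Real.hasDerivAt_arctan _).comp 0 hg
    have hval : (1 / (1 + (μ ^ 2 * 0 / s ^ 2 - a) ^ 2)) * (μ ^ 2 / s ^ 2) = 1 := by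
      have : (μ ^ 2 * 0 / s ^ 2 - a) ^ 2 = μ ^ 2 / s ^ 2 - 1 := by
        rw [mul_zero, zero_div, zero_sub, neg_pow, ha2]; ring
      rw [this]
      have hμ2 : (0:ℝ) < μ ^ 2 / s ^ 2 := by positivity
      field_simp
      ring
    rw [hval] at hat
    have h : HasDerivAt (fun τ : ℝ => Real.pi + τ -
        Real.arctan (μ ^ 2 * τ / s ^ 2 - a) - Real.arctan a) (0 + 1 - 1) 0 :=
      (((hasDerivAt_const 0 Real.pi).add (hasDerivAt_id 0)).sub hat).sub_const _
    have h0 : (0:ℝ) + 1 - 1 = 0 := by ring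
    rw [h0] at h
    exact h.congr_of_eventuallyEq (Filter.Eventually.of_forall fun τ => (hθ τ))
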